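/- Let ρ be a positive definite density matrix on ℂ^{d_S}, let |μ⟩ be a unit vector in ℂ^{d_S} ⊗ ℂ^{d_E} ⊗ ℂ^{d_P} with reduced state ρ on the first factor, and let |ν⟩ be a unit vector in ℂ^{d_S} ⊗ ℂ^{d_Q} with reduced state ρ on the first factor. Then ‖[log₂(ρ) ⊗ I_{EP}, |μ⟩⟨μ|]‖₁ = ‖[log₂(ρ) ⊗ I_Q, |ν⟩⟨ν|]‖₁, i.e. the trace norm of the commutator of the pure state with log₂(ρ) ⊗ I does not depend on the choice of purification. -/

import Mathlib

open scoped Kronecker ComplexOrder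
open Matrix MeasureTheory

noncomputable section

/-- The positive semidefinite square root of a positive semidefinite matrix, as
`Matrix.PosSemidef.sqrt` was defined in the older Mathlib (since removed). -/
def posSemidefSqrt {n : Type*} [Fintype n] [DecidableEq n] {A : Matrix n n ℂ}
    (hA : A.PosSemidef) : Matrix n n ℂ :=
  hA.1.eigenvectorUnitary.1 * diagonal ((↑) ∘ (√·) ∘ hA.1.eigenvalues) *
  (star hA.1.eigenvectorUnitary : Matrix n n ℂ)

/-- The trace norm `‖A‖₁ = Tr √(AᴴA)`. -/
def traceNorm {n : Type*} [Fintype n] [DecidableEq n] (A : Matrix n n ℂ) : ℝ :=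
  ((posSemidefSqrt (Matrix.posSemidef_conjTranspose_mul_self A)).trace).re

/-- The operator (spectral) norm `‖A‖_∞`. -/
def opNorm {n : Type*} [Fintype n] [DecidableEq n] (A : Matrix n n ℂ) : ℝ :=
  ‖Matrix.toEuclideanCLM (𝕜 := ℂ) A‖

/-- The partial trace over the second tensor factor. -/
def ptrace2 {m e : Type*} [Fintype e] (ρ : Matrix (m × e) (m × e) ℂ) : Matrix m m ℂ :=
  Matrix.of fun i j => ∑ k, ρ (i, k) (j, k)

/-- The binary logarithm `log₂` of a Hermitian matrix, via the spectral functional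
calculus (junk value `0` on non-Hermitian input). -/
def matLog2 {n : Type*} [Fintype n] [DecidableEq n] (A : Matrix n n ℂ) : Matrix n n ℂ :=
  if hA : A.IsHermitian then hA.cfc (Real.logb 2) else 0

/-- The commutator `[A, B] = A·B − B·A`. -/
def mcomm {n : Type*} [Fintype n] (A B : Matrix n n ℂ) : Matrix n n ℂ :=
  A * B - B * A

section Aux

variable {n E : Type*} [Fintype n] [DecidableEq n] [Fintype E] [DecidableEq E]

lemma vmv_mul_vmv (u v x y : n → ℂ) :
    vecMulVec u v * vecMulVec x y = (v ⬝ᵥ x) • vecMulVec u y := by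
  ext i j
  simp [mul_apply, vecMulVec_apply, dotProduct, Finset.sum_mul, Finset.mul_sum]
  congr 1; ext k; ring

lemma mul_vmv (M : Matrix n n ℂ) (w v : n → ℂ) :
    M * vecMulVec w v = vecMulVec (M *ᵥ w) v := by
  ext i j; simp [mul_apply, vecMulVec_apply, mulVec, dotProduct, Finset.sum_mul, mul_assoc]

lemma vmv_mul (M : Matrix n n ℂ) (w v : n → ℂ) :
    vecMulVec w v * M = vecMulVec w (v ᵥ* M) := by
  ext i j; simp [mul_apply, vecMulVec_apply, vecMul, dotProduct, Finset.mul_sum]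
  congr 1; ext k; ring

lemma trace_vmv (u v : n → ℂ) : (vecMulVec u v).trace = v ⬝ᵥ u := by
  simp [trace, vecMulVec_apply, dotProduct, diag, mul_comm]

lemma conjTranspose_vmv (u v : n → ℂ) :
    (vecMulVec u v)ᴴ = vecMulVec (star v) (star u) := by
  ext i j; simp [conjTranspose_apply, vecMulVec_apply, mul_comm]

open scoped MatrixOrder in
lemma posSemidefSqrt_eq_of_sq_eq {A N : Matrix n n ℂ} (hA : A.PosSemidef) (hN : N.PosSemidef)
    (h : N ^ 2 = A) : posSemidefSqrt hA = N := by
  have e : posSemidefSqrt hA = CFC.sqrt A := by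
    rw [CFC.sqrt_eq_cfc, cfc_nnreal_eq_real _ A hA.nonneg, hA.1.cfc_eq]
    simp only [IsHermitian.cfc, Unitary.conjStarAlgAut_apply, posSemidefSqrt]
    congr 3
    ext i
    simp [Real.coe_sqrt, Real.coe_toNNReal', hA.eigenvalues_nonneg]
  rw [e, CFC.sqrt_eq_iff _ _ hA.nonneg hN.nonneg, ← sq, h]

lemma psd_real_smul {D : Matrix n n ℂ} (hD : D.PosSemidef) {c : ℝ} (hc : 0 ≤ c) :
    ((c : ℂ) • D).PosSemidef := by
  constructor
  · unfold Matrix.IsHermitian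
    rw [conjTranspose_smul, hD.1.eq]
    congr 1
    simp [Complex.ext_iff]
  · intro x
    have h0 : (0 : ℂ) ≤ (c : ℂ) := by
      rw [Complex.le_def]; simp [hc]
    exact (hD.smul (a := (c : ℂ)) h0).2 x

/-- Key computation: the trace norm of `[L ⊗ I, |w⟩⟨w|]` depends only on the
reduced state of `w`. -/
lemma key (L : Matrix n n ℂ) (hL : L.IsHermitian) (w : n × E → ℂ)
    (hw : star w ⬝ᵥ w = 1) :
    traceNorm (mcomm (L ⊗ₖ (1 : Matrix E E ℂ)) (Matrix.of fun x y => w x * star (w y))) =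
      2 * Real.sqrt
        (((L * L * ptrace2 (Matrix.of fun x y => w x * star (w y))).trace).re -
          (((L * ptrace2 (Matrix.of fun x y => w x * star (w y))).trace).re) ^ 2) := by
  have hP : (Matrix.of fun x y => w x * star (w y)) = vecMulVec w (star w) := rfl
  set M : Matrix (n × E) (n × E) ℂ := L ⊗ₖ (1 : Matrix E E ℂ) with hMdef
  have hM : M.IsHermitian := by
    ext ⟨i, k⟩ ⟨j, l⟩
    simp only [hMdef, conjTranspose_apply, kroneckerMap_apply, Matrix.one_apply, star_mul',
      apply_ite (star : ℂ → ℂ), star_one, star_zero, hL.apply]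
    by_cases h : k = l <;> simp [h, eq_comm]
  set a : n × E → ℂ := M *ᵥ w with hadef
  set α : ℂ := star w ⬝ᵥ a with hαdef
  set s : ℂ := star a ⬝ᵥ a with hsdef
  have hsa : star a = star w ᵥ* M := by
    rw [hadef, star_mulVec, hM.eq]
  have hα : star α = α := by
    rw [hαdef, ← star_dotProduct, hsa, hadef, dotProduct_mulVec]
  have haw : star a ⬝ᵥ w = α := by
    rw [hsa, hαdef, hadef, dotProduct_mulVec]
  -- trace computations vs the reduced state
  have hdot : ∀ K : Matrix n n ℂ,
      star w ⬝ᵥ ((K ⊗ₖ (1 : Matrix E E ℂ)) *ᵥ w) =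
        (K * ptrace2 (Matrix.of fun x y => w x * star (w y))).trace := by
    intro K
    simp only [dotProduct, mulVec, dotProduct, trace, diag_apply, mul_apply, ptrace2,
      Matrix.of_apply, Fintype.sum_prod_type, kroneckerMap_apply, Matrix.one_apply, mul_ite,
      mul_one, mul_zero, ite_mul, zero_mul, Finset.sum_ite_eq, Finset.sum_ite_eq',
      Finset.mem_univ, if_true, Finset.mul_sum, Finset.sum_mul]
    refine Finset.sum_congr rfl fun i _ => ?_
    rw [Finset.sum_comm]
    refine Finset.sum_congr rfl fun j _ => Finset.sum_congr rfl fun k _ => by simp only [Pi.star_apply]; ring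
  have hαtr : α = (L * ptrace2 (Matrix.of fun x y => w x * star (w y))).trace := by
    rw [hαdef, hadef, hMdef]; exact hdot L
  have hstr : s = (L * L * ptrace2 (Matrix.of fun x y => w x * star (w y))).trace := by
    rw [hsdef, hsa, hadef, ← dotProduct_mulVec, mulVec_mulVec, hMdef,
      ← Matrix.mul_kronecker_mul, Matrix.one_mul (1 : Matrix E E ℂ)]
    exact hdot (L * L)
  -- the commutator
  set C : Matrix (n × E) (n × E) ℂ := mcomm M (Matrix.of fun x y => w x * star (w y)) with hCdef
  have hC : C = vecMulVec a (star w) - vecMulVec w (star a) := by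
    rw [hCdef, mcomm, hP, mul_vmv, vmv_mul, hadef, hsa]
  set D : Matrix (n × E) (n × E) ℂ := Cᴴ * C with hDdef
  have hDpsd : D.PosSemidef := posSemidef_conjTranspose_mul_self C
  have hD : D = vecMulVec a (star a) + s • vecMulVec w (star w)
      - α • vecMulVec a (star w) - α • vecMulVec w (star a) := by
    rw [hDdef, hC]
    simp only [conjTranspose_sub, conjTranspose_vmv, star_star, sub_mul, mul_sub,
      vmv_mul_vmv, hw, haw, ← hαdef, ← hsdef, one_smul]
    abel
  -- D² = (s - α²) • D
  have hD2 : D * D = (s - α ^ 2) • D := by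
    rw [hD]
    simp only [sub_mul, mul_sub, add_mul, mul_add, smul_mul_assoc, mul_smul_comm,
      vmv_mul_vmv, hw, haw, ← hαdef, ← hsdef, smul_smul, smul_sub, smul_add, one_smul]
    module
  -- trace of D
  have htrD : D.trace = 2 * (s - α ^ 2) := by
    rw [hD]
    simp only [trace_sub, trace_add, trace_smul, trace_vmv, hw, haw, ← hαdef, ← hsdef,
      smul_eq_mul]
    ring
  -- reality and nonnegativity
  have htrD' : D.trace = ((∑ p, ∑ q, Complex.normSq (C p q) : ℝ) : ℂ) := by
    have e1 : ∀ p q : (n × E), star (C q p) * C q p = ((Complex.normSq (C q p) : ℝ) : ℂ) := by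
      intro p q; rw [Complex.normSq_eq_conj_mul_self]; rfl
    calc D.trace = ∑ p, ∑ q, ((Complex.normSq (C q p) : ℝ) : ℂ) := by
          simp only [hDdef, trace, diag_apply, mul_apply, conjTranspose_apply, e1]
      _ = _ := by rw [Finset.sum_comm]; push_cast; rfl
  set r : ℝ := (s - α ^ 2).re with hrdef
  have hreal : s - α ^ 2 = (r : ℂ) := by
    have h2 : (2 * (s - α ^ 2)).im = 0 := by
      rw [← htrD, htrD']; simp
    have him : (s - α ^ 2).im = 0 := by
      simpa using h2
    rw [hrdef, Complex.ext_iff]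
    simp [him]
  have hsum2 : 2 * r = ∑ p, ∑ q, Complex.normSq (C p q) := by
    have h := htrD.symm.trans htrD'
    rw [hreal] at h
    exact_mod_cast h
  have hsumnn : (0:ℝ) ≤ ∑ p, ∑ q, Complex.normSq (C p q) :=
    Finset.sum_nonneg fun p _ => Finset.sum_nonneg fun q _ => Complex.normSq_nonneg _
  have hr0 : 0 ≤ r := by linarith
  -- if r = 0 then D = 0
  have hDzero : r = 0 → D = 0 := by
    intro h
    have hsum : ∑ p, ∑ q, Complex.normSq (C p q) = 0 := by
      rw [← hsum2, h]; ring
    have hC0 : C = 0 := by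
      ext p q
      have h1 : ∀ p ∈ Finset.univ, (0:ℝ) ≤ ∑ q, Complex.normSq (C p q) :=
        fun p _ => Finset.sum_nonneg fun q _ => Complex.normSq_nonneg _
      have h2 := (Finset.sum_eq_zero_iff_of_nonneg h1).mp hsum p (Finset.mem_univ p)
      have h3 := (Finset.sum_eq_zero_iff_of_nonneg
        (fun q _ => Complex.normSq_nonneg (C p q))).mp h2 q (Finset.mem_univ q)
      simpa using Complex.normSq_eq_zero.mp h3
    rw [hDdef, hC0]; simp
  -- the square root of D
  set N : Matrix (n × E) (n × E) ℂ := ((Real.sqrt r : ℂ))⁻¹ • D with hNdef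
  have hNpsd : N.PosSemidef := by
    have hco : ((Real.sqrt r : ℂ))⁻¹ = (((Real.sqrt r)⁻¹ : ℝ) : ℂ) := by push_cast; ring
    rw [hNdef, hco]
    exact psd_real_smul hDpsd (inv_nonneg.mpr (Real.sqrt_nonneg r))
  have hNsq : N ^ 2 = D := by
    rcases eq_or_lt_of_le hr0 with h | h
    · rw [hNdef, hDzero h.symm]; simp
    · rw [hNdef, pow_two, smul_mul_assoc, mul_smul_comm, hD2, hreal, smul_smul, smul_smul]
      have hrs : ((r:ℝ):ℂ) = (Real.sqrt r : ℂ) * (Real.sqrt r : ℂ) := by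
        exact_mod_cast (Real.mul_self_sqrt hr0).symm
      have hsne : (Real.sqrt r : ℂ) ≠ 0 := by
        exact_mod_cast ne_of_gt (Real.sqrt_pos.mpr h)
      rw [hrs]
      field_simp
      exact one_smul _ _
  have hsqrt : posSemidefSqrt hDpsd = N := posSemidefSqrt_eq_of_sq_eq hDpsd hNpsd hNsq
  -- conclude
  have htn : traceNorm C = (N.trace).re := by
    unfold traceNorm
    rw [show posSemidefSqrt (posSemidef_conjTranspose_mul_self C) = N from hsqrt]
  -- identify r with the stated quantity
  have hα' : α = ((α.re : ℝ) : ℂ) := (Complex.conj_eq_iff_re.mp hα).symm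
  have hrr : r = ((L * L * ptrace2 (Matrix.of fun x y => w x * star (w y))).trace).re -
      (((L * ptrace2 (Matrix.of fun x y => w x * star (w y))).trace).re) ^ 2 := by
    rw [← hstr, ← hαtr, hrdef]
    have : (α ^ 2).re = α.re ^ 2 := by
      rw [hα']; simp [← Complex.ofReal_pow]
    simp [Complex.sub_re, this]
  rw [htn, hNdef, trace_smul, htrD, hreal, ← hrr]
  have hco : ((Real.sqrt r : ℂ))⁻¹ • (2 * ((r:ℝ):ℂ)) = (((Real.sqrt r)⁻¹ * (2 * r) : ℝ) : ℂ) := by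
    push_cast; rw [smul_eq_mul]
  rw [hco, Complex.ofReal_re]
  rcases eq_or_lt_of_le hr0 with h | h
  · rw [← h]; simp
  · have hrs : r = Real.sqrt r * Real.sqrt r := (Real.mul_self_sqrt hr0).symm
    have hsne : Real.sqrt r ≠ 0 := ne_of_gt (Real.sqrt_pos.mpr h)
    field_simp
    nlinarith [hrs]

end Aux

/-- The trace norm of the commutator `[log₂(ρ) ⊗ I, |purification⟩⟨purification|]`
does not depend on the choice of purification of `ρ`. -/
theorem traceNorm_comm_log_purification_independent {dS dE dP dQ : ℕ}
    (ρ : Matrix (Fin dS) (Fin dS) ℂ) (hρ : ρ.PosDef) (htr : ρ.trace = 1)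
    (w : Fin dS × (Fin dE × Fin dP) → ℂ)
    (hwunit : ∑ x, Complex.normSq (w x) = 1)
    (hwred : ptrace2 (Matrix.of fun x y => w x * star (w y)) = ρ)
    (v : Fin dS × Fin dQ → ℂ)
    (hvunit : ∑ x, Complex.normSq (v x) = 1)
    (hvred : ptrace2 (Matrix.of fun x y => v x * star (v y)) = ρ) :
    traceNorm (mcomm (matLog2 ρ ⊗ₖ (1 : Matrix (Fin dE × Fin dP) (Fin dE × Fin dP) ℂ))
        (Matrix.of fun x y => w x * star (w y))) =
      traceNorm (mcomm (matLog2 ρ ⊗ₖ (1 : Matrix (Fin dQ) (Fin dQ) ℂ))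
        (Matrix.of fun x y => v x * star (v y))) := by
  have hL : (matLog2 ρ).IsHermitian := by
    rw [matLog2, dif_pos hρ.isHermitian, ← Matrix.IsHermitian.cfc_eq]
    exact (cfc_predicate (Real.logb 2) ρ : IsSelfAdjoint _)
  have hunit : ∀ {m : Type} [Fintype m] (u : m → ℂ),
      ∑ x, Complex.normSq (u x) = 1 → star u ⬝ᵥ u = 1 := by
    intro m _ u hu
    have : star u ⬝ᵥ u = ((∑ x, Complex.normSq (u x) : ℝ) : ℂ) := by
      push_cast
      simp [dotProduct, Complex.normSq_eq_conj_mul_self]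
    rw [this, hu]; norm_num
  rw [key (matLog2 ρ) hL w (hunit w hwunit), key (matLog2 ρ) hL v (hunit v hvunit),
    hwred, hvred]
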